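/- Let f be a form of degree d in n variables over k and let A = (a_{ij}) ∈ k^{n×n}. Then there exists a form g of degree d in n variables such that ∂g/∂x_j = Σ_{i=1}^n (∂f/∂x_i)·a_{ij} for all j = 1,…,n, if and only if A ∈ Z(f). -/

import Mathlib

open MvPolynomial Matrix

/-- The Hessian matrix of a multivariate polynomial. -/
noncomputable def hessian {k : Type*} [Field k] {σ : Type*} (f : MvPolynomial σ k) :
    Matrix σ σ (MvPolynomial σ k) :=
  Matrix.of fun i j => pderiv i (pderiv j f)

/-- The center of a form `f`: scalar matrices `X` such that `H · X` is symmetric,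
where `H` is the Hessian matrix of `f`. -/
def center {k : Type*} [Field k] {σ : Type*} [Fintype σ] (f : MvPolynomial σ k) :
    Set (Matrix σ σ k) :=
  {X | (hessian f * X.map (C : k → MvPolynomial σ k))ᵀ
        = hessian f * X.map (C : k → MvPolynomial σ k)}


lemma X_mul_pderiv_monomial {k : Type*} [CommSemiring k] {σ : Type*} (j : σ)
    (s : σ →₀ ℕ) (a : k) :
    X j * pderiv j (monomial s a) = monomial s (a * s j) := by
  classical
  rw [pderiv_monomial]
  rcases eq_or_ne (s j) 0 with h | h
  · simp [h]
  · rw [X, monomial_mul, one_mul]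
    congr 1
    rw [add_tsub_cancel_of_le]
    rwa [Finsupp.single_le_iff, Nat.one_le_iff_ne_zero]

lemma euler_identity {k : Type*} [CommSemiring k] {n d : ℕ} {f : MvPolynomial (Fin n) k}
    (hf : f.IsHomogeneous d) :
    ∑ j : Fin n, X j * pderiv j f = d • f := by
  conv_lhs => rw [f.as_sum]
  conv_rhs => rw [f.as_sum]
  rw [Finset.smul_sum]
  simp only [map_sum, Finset.mul_sum]
  rw [Finset.sum_comm]
  refine Finset.sum_congr rfl fun s hs => ?_
  simp only [_root_.X_mul_pderiv_monomial]
  rw [← Finset.sum_congr rfl fun j (_ : j ∈ Finset.univ) => rfl]  -- noop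
  have hdeg : s.degree = d := by
    have := hf (MvPolynomial.mem_support_iff.mp hs)
    rwa [Finsupp.degree_eq_weight_one]
  rw [← map_sum, ← Finset.mul_sum]
  have : ∑ j : Fin n, s j = d := by
    rw [← hdeg, Finsupp.degree]
    exact (Finset.sum_subset (Finset.subset_univ _) (by simp +contextual [Finsupp.notMem_support_iff])).symm
  simp only [← Nat.cast_sum, this, smul_monomial]
  congr 1
  rw [mul_comm, nsmul_eq_mul]

lemma isHomogeneous_pderiv {k : Type*} [CommSemiring k] {σ : Type*} {d : ℕ}
    {f : MvPolynomial σ k} (hf : f.IsHomogeneous d) (i : σ) :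
    (pderiv i f).IsHomogeneous (d - 1) := by
  classical
  rw [f.as_sum, map_sum]
  apply IsHomogeneous.sum
  intro s hs
  rw [pderiv_monomial]
  rcases eq_or_ne (s i) 0 with h | h
  · rw [h]; simp only [Nat.cast_zero, mul_zero]
    rw [monomial_zero]
    exact isHomogeneous_zero _ _ _
  · apply isHomogeneous_monomial
    have hdeg : s.degree = d := by
      have := hf (MvPolynomial.mem_support_iff.mp hs)
      rwa [Finsupp.degree_eq_weight_one]
    have hle : Finsupp.single i 1 ≤ s := by
      rwa [Finsupp.single_le_iff, Nat.one_le_iff_ne_zero]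
    have : (s - Finsupp.single i 1) + Finsupp.single i 1 = s := tsub_add_cancel_of_le hle
    have h1 : (Finsupp.weight (1 : σ → ℕ)) (Finsupp.single i 1) = 1 := by
      simp [Finsupp.weight_apply, Finsupp.sum_single_index]
    have hw : (Finsupp.weight (1 : σ → ℕ)) (s - Finsupp.single i 1)
        + (Finsupp.weight (1 : σ → ℕ)) (Finsupp.single i 1) = (Finsupp.weight (1 : σ → ℕ)) s := by
      rw [← map_add, this]
    have hd2 : (s - Finsupp.single i 1).degree + 1 = d := by
      rw [Finsupp.degree_eq_weight_one] at hdeg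
      rw [Finsupp.degree_eq_weight_one, ← hdeg]; rw [h1] at hw; exact hw
    omega

lemma pderiv_pderiv_comm {k : Type*} [CommSemiring k] {σ : Type*} (i j : σ)
    (f : MvPolynomial σ k) :
    pderiv i (pderiv j f) = pderiv j (pderiv i f) := by
  classical
  induction f using MvPolynomial.induction_on' with
  | monomial s a =>
    rcases eq_or_ne i j with rfl | h
    · rfl
    · simp only [pderiv_monomial]
      rw [tsub_right_comm]
      congr 1
      rw [Finsupp.tsub_apply, Finsupp.tsub_apply, Finsupp.single_eq_of_ne' h,
        Finsupp.single_eq_of_ne' (Ne.symm h), Nat.sub_zero, Nat.sub_zero, mul_right_comm]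
  | add p q hp hq => simp [hp, hq]

/-- the row vector of partial derivatives of `f` multiplied by a scalar
matrix `A` lifts to the gradient of a form `g` of degree `d` iff `A` belongs to the
center of `f`. -/
theorem lift_gradient_iff_mem_center {k : Type*} [Field k] {n d : ℕ} (hd : 3 ≤ d)
    (hchar : ringChar k = 0 ∨ d < ringChar k)
    (f : MvPolynomial (Fin n) k) (hf : f.IsHomogeneous d)
    (A : Matrix (Fin n) (Fin n) k) :
    (∃ g : MvPolynomial (Fin n) k, g.IsHomogeneous d ∧
        ∀ j : Fin n, pderiv j g = ∑ i : Fin n, pderiv i f * C (A i j)) ↔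
      A ∈ center f := by
  classical
  set F : Fin n → MvPolynomial (Fin n) k := fun j => ∑ i : Fin n, pderiv i f * C (A i j) with hF
  have hpd : ∀ i j, pderiv i (F j)
      = (hessian f * A.map (C : k → MvPolynomial (Fin n) k)) i j := by
    intro i j
    rw [Matrix.mul_apply]
    simp only [hF, map_sum, hessian, Matrix.of_apply, Matrix.map_apply]
    refine Finset.sum_congr rfl fun l _ => ?_
    rw [pderiv_mul, pderiv_C, mul_zero, add_zero]
  have hcen : A ∈ center f ↔ ∀ i j, pderiv i (F j) = pderiv j (F i) := by
    simp only [center, Set.mem_setOf_eq, ← Matrix.ext_iff, Matrix.transpose_apply]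
    constructor
    · intro h i j
      rw [hpd, hpd]
      exact h j i
    · intro h i j
      rw [← hpd, ← hpd]
      exact h j i
  constructor
  · rintro ⟨g, hg, hgrad⟩
    rw [hcen]
    intro i j
    simp only [hF, ← hgrad]
    exact pderiv_pderiv_comm i j g
  · intro hA
    have hd0 : (d : k) ≠ 0 := by
      rcases hchar with h0 | hlt
      · haveI : CharP k 0 := h0 ▸ ringChar.charP k
        haveI : CharZero k := CharP.charP_to_charZero k
        exact Nat.cast_ne_zero.mpr (by omega)
      · haveI := ringChar.charP k
        rw [Ne, CharP.cast_eq_zero_iff k (ringChar k)]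
        intro hdvd
        have := Nat.le_of_dvd (by omega) hdvd
        omega
    have hFh : ∀ j, (F j).IsHomogeneous (d - 1) := fun j =>
      IsHomogeneous.sum _ _ _ fun i _ =>
        (isHomogeneous_pderiv hf i).mul (isHomogeneous_C _ _)
    refine ⟨C ((d : k)⁻¹) * ∑ l : Fin n, X l * F l, ?_, ?_⟩
    · apply IsHomogeneous.C_mul
      apply IsHomogeneous.sum
      intro l _
      have h1d : 1 + (d - 1) = d := by omega
      exact h1d ▸ (isHomogeneous_X k l).mul (hFh l)
    · intro j
      rw [pderiv_C_mul, map_sum]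
      rw [Finset.sum_congr rfl fun l (_ : l ∈ Finset.univ) => (pderiv_mul (i := j) (f := X l) (g := F l))]
      rw [Finset.sum_add_distrib]
      have e1 : ∑ l : Fin n, pderiv j (X l) * F l = F j := by
        rw [Finset.sum_eq_single j]
        · rw [pderiv_X_self, one_mul]
        · intro l _ hlj
          rw [pderiv_X_of_ne hlj, zero_mul]
        · simp
      have e2 : ∑ l : Fin n, X l * pderiv j (F l) = (d - 1) • F j := by
        rw [Finset.sum_congr rfl fun l (_ : l ∈ Finset.univ) => by rw [hcen.mp hA j l]]
        exact euler_identity (hFh j)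
      rw [e1, e2]
      have hsum : F j + (d - 1) • F j = d • F j := by
        have hd1 : d = 1 + (d - 1) := by omega
        conv_rhs => rw [hd1]
        rw [add_nsmul, one_nsmul]
      rw [hsum, nsmul_eq_mul]
      rw [show ((d : ℕ) : MvPolynomial (Fin n) k) = C ((d : ℕ) : k) from (map_natCast C d).symm]
      rw [← mul_assoc, ← C_mul, inv_mul_cancel₀ hd0, C_1, one_mul]
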